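/- arXiv:2603.20845 — 3 statements merged into one kernel-verified Lean document; each statement's English description precedes it below -/
import Mathlib

section
/- In the signature with exactly two constant symbols a,b, with X = {χₙ | n ∈ ℕ} where χₙ is a classical sentence expressing that the domain has at least n elements: for every finite subset X₀ ⊆ X, it is NOT the case that X₀ ∪ {η} ⊨_id θ. A counter-model is the canonical full id-model M_D over a set D with k+1 elements, k the largest n with χₙ ∈ X₀: M_D supports every member of X₀ and η, but does not support θ. -/
namespace InqBQ

/-- A signature: predicate symbols and function symbols, each with an arity. -/
structure Sig where
  Pred : Type
  parity : Pred → ℕ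
  Func : Type
  farity : Func → ℕ

/-- Terms over a signature, with variables indexed by `ℕ`. -/
inductive Term (σ : Sig) : Type where
  | var : ℕ → Term σ
  | func : (f : σ.Func) → (Fin (σ.farity f) → Term σ) → Term σ

/-- Formulas of InqBQ. -/
inductive Formula (σ : Sig) : Type where
  | pred : (P : σ.Pred) → (Fin (σ.parity P) → Term σ) → Formula σ
  | eq : Term σ → Term σ → Formula σ
  | falsum : Formula σ
  | conj : Formula σ → Formula σ → Formula σ
  | idisj : Formula σ → Formula σ → Formula σ
  | impl : Formula σ → Formula σ → Formula σ
  | all : ℕ → Formula σ → Formula σ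
  | iex : ℕ → Formula σ → Formula σ

variable {σ : Sig}

/-- ¬φ := φ → ⊥ -/
def Formula.neg (φ : Formula σ) : Formula σ := .impl φ .falsum

/-- ?φ := φ ⩒ ¬φ -/
def Formula.qm (φ : Formula σ) : Formula σ := .idisj φ φ.neg

/-- ⊤ := ¬⊥ -/
def Formula.verum : Formula σ := Formula.neg .falsum

/-- Classical formulas: no inquisitive disjunction, no inquisitive existential. -/
def Formula.IsClassical : Formula σ → Prop
  | .pred _ _ => True
  | .eq _ _ => True
  | .falsum => True
  | .conj φ ψ => φ.IsClassical ∧ ψ.IsClassical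
  | .idisj _ _ => False
  | .impl φ ψ => φ.IsClassical ∧ ψ.IsClassical
  | .all _ φ => φ.IsClassical
  | .iex _ _ => False

/-- The variable `n` occurs in a term. -/
def Term.VarOccurs : Term σ → ℕ → Prop
  | .var m, n => m = n
  | .func _ ts, n => ∃ i, (ts i).VarOccurs n

/-- The variable `n` occurs free in a formula. -/
def Formula.FreeVar : Formula σ → ℕ → Prop
  | .pred _ ts, n => ∃ i, (ts i).VarOccurs n
  | .eq t t', n => t.VarOccurs n ∨ t'.VarOccurs n
  | .falsum, _ => False
  | .conj φ ψ, n => φ.FreeVar n ∨ ψ.FreeVar n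
  | .idisj φ ψ, n => φ.FreeVar n ∨ ψ.FreeVar n
  | .impl φ ψ, n => φ.FreeVar n ∨ ψ.FreeVar n
  | .all x φ, n => n ≠ x ∧ φ.FreeVar n
  | .iex x φ, n => n ≠ x ∧ φ.FreeVar n

/-- A sentence is a formula with no free variables. -/
def Formula.IsSentence (φ : Formula σ) : Prop := ∀ n, ¬ φ.FreeVar n

/-- A first-order information model `M = (W, D, I, ∼)`. -/
structure Model (σ : Sig) where
  W : Type
  D : Type
  wNonempty : Nonempty W
  dNonempty : Nonempty D
  predI : W → (P : σ.Pred) → (Fin (σ.parity P) → D) → Prop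
  funcI : W → (f : σ.Func) → (Fin (σ.farity f) → D) → D
  eqI : W → D → D → Prop
  eqEquiv : ∀ w, Equivalence (eqI w)
  predCongr : ∀ w P (as bs : Fin (σ.parity P) → D),
      (∀ i, eqI w (as i) (bs i)) → (predI w P as ↔ predI w P bs)
  funcCongr : ∀ w f (as bs : Fin (σ.farity f) → D),
      (∀ i, eqI w (as i) (bs i)) → eqI w (funcI w f as) (funcI w f bs)

/-- Denotation `[t]^g_w` of a term at a world under an assignment. -/
def Term.val (M : Model σ) (w : M.W) (g : ℕ → M.D) : Term σ → M.D
  | .var n => g n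
  | .func f ts => M.funcI w f (fun i => (ts i).val M w g)

/-- The support relation `M, s ⊨_g φ`. -/
def Support (M : Model σ) : Set M.W → (ℕ → M.D) → Formula σ → Prop
  | s, g, .pred P ts => ∀ w ∈ s, M.predI w P (fun i => (ts i).val M w g)
  | s, g, .eq t t' => ∀ w ∈ s, M.eqI w (t.val M w g) (t'.val M w g)
  | s, _, .falsum => s = ∅
  | s, g, .conj φ ψ => Support M s g φ ∧ Support M s g ψ
  | s, g, .idisj φ ψ => Support M s g φ ∨ Support M s g ψ
  | s, g, .impl φ ψ => ∀ t : Set M.W, t ⊆ s → Support M t g φ → Support M t g ψ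
  | s, g, .all x φ => ∀ d : M.D, Support M s (Function.update g x d) φ
  | s, g, .iex x φ => ∃ d : M.D, Support M s (Function.update g x d) φ

/-- Id-models: `=` is interpreted as identity on the domain at each world. -/
def Model.IsId (M : Model σ) : Prop := ∀ w (d d' : M.D), M.eqI w d d' ↔ d = d'

/-- Entailment in InqBQ. -/
def Entails (Φ : Set (Formula σ)) (ψ : Formula σ) : Prop :=
  ∀ (M : Model σ) (s : Set M.W) (g : ℕ → M.D),
    (∀ φ ∈ Φ, Support M s g φ) → Support M s g ψ

/-- Entailment restricted to id-models. -/
def EntailsId (Φ : Set (Formula σ)) (ψ : Formula σ) : Prop :=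
  ∀ (M : Model σ), M.IsId → ∀ (s : Set M.W) (g : ℕ → M.D),
    (∀ φ ∈ Φ, Support M s g φ) → Support M s g ψ

/-- Validity in InqBQ. -/
def Valid (ψ : Formula σ) : Prop :=
  ∀ (M : Model σ) (s : Set M.W) (g : ℕ → M.D), Support M s g ψ

/-- Validity over id-models. -/
def IdValid (ψ : Formula σ) : Prop :=
  ∀ (M : Model σ), M.IsId → ∀ (s : Set M.W) (g : ℕ → M.D), Support M s g ψ

/-- Equivalence of formulas. -/
def FmEquiv (φ ψ : Formula σ) : Prop :=
  ∀ (M : Model σ) (s : Set M.W) (g : ℕ → M.D), Support M s g φ ↔ Support M s g ψ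

/-- A formula is truth-conditional if support at a state reduces to truth at each world. -/
def TruthConditional (φ : Formula σ) : Prop :=
  ∀ (M : Model σ) (s : Set M.W) (g : ℕ → M.D),
    Support M s g φ ↔ ∀ w ∈ s, Support M {w} g φ

/-- A standard (Tarskian) relational structure for the signature. -/
structure Struc (σ : Sig) where
  D : Type
  dNonempty : Nonempty D
  predI : (P : σ.Pred) → (Fin (σ.parity P) → D) → Prop
  funcI : (f : σ.Func) → (Fin (σ.farity f) → D) → D

/-- Tarskian term denotation. -/
def Term.tval (A : Struc σ) (g : ℕ → A.D) : Term σ → A.D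
  | .var n => g n
  | .func f ts => A.funcI f (fun i => (ts i).tval A g)

/-- Standard Tarskian satisfaction (reading `→` as material implication, `=` as identity). -/
def TSat (A : Struc σ) : (ℕ → A.D) → Formula σ → Prop
  | g, .pred P ts => A.predI P (fun i => (ts i).tval A g)
  | g, .eq t t' => t.tval A g = t'.tval A g
  | _, .falsum => False
  | g, .conj φ ψ => TSat A g φ ∧ TSat A g ψ
  | g, .idisj φ ψ => TSat A g φ ∨ TSat A g ψ
  | g, .impl φ ψ => TSat A g φ → TSat A g ψ
  | g, .all x φ => ∀ d : A.D, TSat A (Function.update g x d) φ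
  | g, .iex x φ => ∃ d : A.D, TSat A (Function.update g x d) φ

/-- Classical first-order (Tarskian) entailment. -/
def FOLEntails (Γ : Set (Formula σ)) (α : Formula σ) : Prop :=
  ∀ (A : Struc σ) (g : ℕ → A.D), (∀ γ ∈ Γ, TSat A g γ) → TSat A g α

/-- The setoid on the domain given by `∼_w`. -/
def Model.setoidAt (M : Model σ) (w : M.W) : Setoid M.D := ⟨M.eqI w, M.eqEquiv w⟩

/-- The quotient relational structure `𝓜_w = (D/∼_w, I_w^∼)` induced at world `w`. -/
noncomputable def Model.quotStruc (M : Model σ) (w : M.W) : Struc σ where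
  D := Quotient (M.setoidAt w)
  dNonempty := Nonempty.map (Quotient.mk (M.setoidAt w)) M.dNonempty
  predI P as := ∃ bs : Fin (σ.parity P) → M.D,
    (∀ i, Quotient.mk (M.setoidAt w) (bs i) = as i) ∧ M.predI w P bs
  funcI f as := Quotient.mk (M.setoidAt w) (M.funcI w f (fun i => (as i).out))

/-- λt := ∃̷x (x = t). -/
def lam (x : ℕ) (t : Term σ) : Formula σ := .iex x (.eq (.var x) t)

/-- Conjunction of a finite list of formulas. -/
def conjList (l : List (Formula σ)) : Formula σ := l.foldr .conj Formula.verum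

/-- x ≠ t. -/
def neTm (x : ℕ) (t : Term σ) : Formula σ := (Formula.eq (.var x) t).neg

/-- ∃̷x (x ≠ t). -/
def iexNe (t : Term σ) : Formula σ := .iex 0 (neTm 0 t)

/-- η := (=(a;b) ∧ =(b;a) ∧ ∃̷x(x≠b)) → ∃̷x(x≠a). -/
def etaOf (a b : Term σ) : Formula σ :=
  .impl (.conj (.impl (lam 0 a) (lam 0 b))
          (.conj (.impl (lam 0 b) (lam 0 a)) (iexNe b)))
    (iexNe a)

/-- θ := ∃̷x ∃̷y ¬(x = a ∧ y = b). -/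
def thetaOf (a b : Term σ) : Formula σ :=
  .iex 0 (.iex 1 (Formula.neg (.conj (.eq (.var 0) a) (.eq (.var 1) b))))

/-- ρ := ∀x∀y ?(x = y). -/
def rho : Formula σ := .all 0 (.all 1 (Formula.qm (.eq (.var 0) (.var 1))))

/-- The signature with exactly two constant symbols `a`, `b` (and no predicates). -/
def sigAB : Sig where
  Pred := Empty
  parity := fun P => P.elim
  Func := Bool
  farity := fun _ => 0

/-- The constant `a`. -/
def tA : Term sigAB := .func false Fin.elim0

/-- The constant `b`. -/
def tB : Term sigAB := .func true Fin.elim0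

def etaAB : Formula sigAB := etaOf tA tB

def thetaAB : Formula sigAB := thetaOf tA tB

/-- `a_w`. -/
def aVal (M : Model sigAB) (w : M.W) : M.D := M.funcI w false Fin.elim0

/-- `b_w`. -/
def bVal (M : Model sigAB) (w : M.W) : M.D := M.funcI w true Fin.elim0

/-- `R_s = {(a_w, b_w) | w ∈ s}`. -/
def RelOf (M : Model sigAB) (s : Set M.W) : Set (M.D × M.D) :=
  {p | ∃ w ∈ s, p = (aVal M w, bVal M w)}

/-- An id-model (for the signature with the two constants a, b) is full if `R_W = D × D`. -/
def Model.IsFull (M : Model sigAB) : Prop := RelOf M Set.univ = Set.univ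

/-- Classical existential quantifier ∃xφ := ¬∀x¬φ. -/
def cExists (x : ℕ) (φ : Formula σ) : Formula σ := (Formula.all x φ.neg).neg

/-- ⋀_{i<j<n} (xᵢ ≠ xⱼ). -/
def distinctFm (n : ℕ) : Formula sigAB :=
  conjList ((List.range n).flatMap fun i => (List.range n).filterMap fun j =>
    if i < j then some ((Formula.eq (.var i) (.var j)).neg) else none)

/-- χₙ := ∃x₁…∃xₙ ⋀_{i<j} (xᵢ ≠ xⱼ), expressing that there are at least n elements. -/
def chi (n : ℕ) : Formula sigAB := (List.range n).foldr cExists (distinctFm n)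

/-- The canonical full id-model over a nonempty domain `D`: worlds are pairs `(d, e)`,
with `a_{(d,e)} = d` and `b_{(d,e)} = e`. -/
def canonModel (D : Type) (hD : Nonempty D) : Model sigAB where
  W := D × D
  D := D
  wNonempty := Nonempty.map (fun d => (d, d)) hD
  dNonempty := hD
  predI := fun _ P => P.elim
  funcI := fun w f _ => cond f w.2 w.1
  eqI := fun _ => Eq
  eqEquiv := fun _ => eq_equivalence
  predCongr := fun _ P => P.elim
  funcCongr := fun _ _ _ _ _ => rfl

/-- Extending a signature with two fresh constant symbols `a`, `b`. -/
def sigExt (σ : Sig) : Sig where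
  Pred := σ.Pred
  parity := σ.parity
  Func := σ.Func ⊕ Bool
  farity := Sum.elim σ.farity (fun _ => 0)

/-- Lift of a term to the extended signature. -/
def Term.lift : Term σ → Term (sigExt σ)
  | .var n => .var n
  | .func f ts => .func (Sum.inl f) (fun i => (ts i).lift)

/-- Lift of a formula to the extended signature. -/
def Formula.lift : Formula σ → Formula (sigExt σ)
  | .pred P ts => .pred P (fun i => (ts i).lift)
  | .eq t t' => .eq t.lift t'.lift
  | .falsum => .falsum
  | .conj φ ψ => .conj φ.lift ψ.lift
  | .idisj φ ψ => .idisj φ.lift ψ.lift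
  | .impl φ ψ => .impl φ.lift ψ.lift
  | .all x φ => .all x φ.lift
  | .iex x φ => .iex x φ.lift

/-- The fresh constant `a` of the extended signature. -/
def extA : Term (sigExt σ) := .func (Sum.inr false) Fin.elim0

/-- The fresh constant `b` of the extended signature. -/
def extB : Term (sigExt σ) := .func (Sum.inr true) Fin.elim0

/-- The canonical full id-model based on a relational structure `𝓜`: worlds are pairs
`(d, e)`; `a_{(d,e)} = d`, `b_{(d,e)} = e`, and all symbols of `σ` are interpreted
rigidly as in `𝓜`. -/
def canonModelOf (A : Struc σ) : Model (sigExt σ) where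
  W := A.D × A.D
  D := A.D
  wNonempty := Nonempty.map (fun d => (d, d)) A.dNonempty
  dNonempty := A.dNonempty
  predI := fun _ P => A.predI P
  funcI := fun w f => match f with
    | .inl f₀ => fun as => A.funcI f₀ as
    | .inr b => fun _ => cond b w.2 w.1
  eqI := fun _ => Eq
  eqEquiv := fun _ => eq_equivalence
  predCongr := fun _ P as bs h => by
    have hab : as = bs := funext fun i => h i
    rw [hab]
  funcCongr := fun w f as bs h => by
    have hab : as = bs := funext fun i => h i
    rw [hab]

/-! ### Auxiliary machinery for Statement 14 -/

/-- A dummy Tarskian structure over domain `D` for the signature `sigAB`. -/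
noncomputable def strucD (D : Type) (hD : Nonempty D) : Struc sigAB where
  D := D
  dNonempty := hD
  predI := fun P => P.elim
  funcI := fun _ _ => Classical.choice hD

/-- Formulas built only from equalities between variables, `⊥`, `∧`, `→`, `∀`. -/
def Rigid : Formula sigAB → Prop
  | .pred _ _ => False
  | .eq t t' => (∃ m, t = .var m) ∧ (∃ m, t' = .var m)
  | .falsum => True
  | .conj φ ψ => Rigid φ ∧ Rigid ψ
  | .idisj _ _ => False
  | .impl φ ψ => Rigid φ ∧ Rigid ψ
  | .all _ φ => Rigid φ
  | .iex _ _ => False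

lemma rigid_support (D : Type) (hD : Nonempty D) :
    ∀ φ : Formula sigAB, Rigid φ → ∀ (s : Set (canonModel D hD).W) (g : ℕ → D),
      Support (canonModel D hD) s g φ ↔ (s = ∅ ∨ TSat (strucD D hD) g φ) := by
  intro φ
  induction φ with
  | pred P ts => exact fun h => h.elim
  | eq t t' =>
    rintro ⟨⟨m, rfl⟩, ⟨n, rfl⟩⟩ s g
    simp only [Support, TSat, Term.val, Term.tval]
    constructor
    · intro hh
      by_cases hs : s = ∅
      · exact Or.inl hs
      · obtain ⟨w, hw⟩ := Set.nonempty_iff_ne_empty.mpr hs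
        exact Or.inr (hh w hw)
    · rintro (rfl | hgg) w hw
      · exact absurd hw (Set.notMem_empty w)
      · exact hgg
  | falsum =>
    intro _ s g
    simp [Support, TSat]
  | conj φ ψ ihφ ihψ =>
    rintro ⟨hφ, hψ⟩ s g
    simp only [Support, TSat, ihφ hφ, ihψ hψ]
    tauto
  | idisj φ ψ _ _ => exact fun h => h.elim
  | impl φ ψ ihφ ihψ =>
    rintro ⟨hφ, hψ⟩ s g
    simp only [Support, TSat]
    constructor
    · intro h
      by_cases hs : s = ∅
      · exact Or.inl hs
      · refine Or.inr fun hT => ?_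
        have := h s subset_rfl ((ihφ hφ s g).mpr (Or.inr hT))
        rcases (ihψ hψ s g).mp this with rfl | hT'
        · exact absurd rfl hs
        · exact hT'
    · intro h t hts ht
      rcases h with rfl | himp
      · have : t = ∅ := Set.subset_eq_empty hts rfl
        exact (ihψ hψ t g).mpr (Or.inl this)
      · rcases (ihφ hφ t g).mp ht with rfl | hT
        · exact (ihψ hψ ∅ g).mpr (Or.inl rfl)
        · exact (ihψ hψ t g).mpr (Or.inr (himp hT))
  | all x φ ih =>
    intro h s g
    simp only [Support, TSat]
    constructor
    · intro hh
      by_cases hs : s = ∅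
      · exact Or.inl hs
      · refine Or.inr fun d => ?_
        rcases (ih h s _).mp (hh d) with rfl | hT
        · exact absurd rfl hs
        · exact hT
    · rintro (rfl | hT) d
      · exact (ih h _ _).mpr (Or.inl rfl)
      · exact (ih h _ _).mpr (Or.inr (hT d))
  | iex x φ _ => exact fun h => h.elim

lemma tsat_cExists (A : Struc sigAB) (g : ℕ → A.D) (x : ℕ) (φ : Formula sigAB) :
    TSat A g (cExists x φ) ↔ ∃ d, TSat A (Function.update g x d) φ := by
  simp only [cExists, Formula.neg, TSat]
  constructor
  · intro h
    by_contra hne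
    push_neg at hne
    exact h fun d hd => hne d hd
  · rintro ⟨d, hd⟩ h
    exact h d hd

lemma tsat_foldr (A : Struc sigAB) (ψ : Formula sigAB) :
    ∀ (l : List ℕ) (g : ℕ → A.D),
      TSat A g (l.foldr cExists ψ) ↔
        ∃ v : ℕ → A.D, (∀ x, x ∉ l → v x = g x) ∧ TSat A v ψ := by
  intro l
  induction l with
  | nil =>
    intro g
    constructor
    · intro h
      exact ⟨g, fun _ _ => rfl, h⟩
    · rintro ⟨v, hv, hT⟩
      have : v = g := funext fun x => hv x List.not_mem_nil
      rwa [this] at hT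
  | cons x l ih =>
    intro g
    rw [List.foldr_cons, tsat_cExists]
    constructor
    · rintro ⟨d, hd⟩
      obtain ⟨v, hv, hT⟩ := (ih _).mp hd
      refine ⟨v, fun y hy => ?_, hT⟩
      have hyx : y ≠ x := fun h => hy (h ▸ List.mem_cons_self (a := x) (l := l))
      have hyl : y ∉ l := fun h => hy (List.mem_cons_of_mem x h)
      rw [hv y hyl, Function.update_of_ne hyx]
    · rintro ⟨v, hv, hT⟩
      refine ⟨v x, (ih _).mpr ⟨v, fun y hy => ?_, hT⟩⟩
      by_cases hyx : y = x
      · subst hyx; simp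
      · rw [Function.update_of_ne hyx]
        exact hv y (by simp [hyx, hy])

lemma tsat_conjList (A : Struc sigAB) (g : ℕ → A.D) (l : List (Formula sigAB)) :
    TSat A g (conjList l) ↔ ∀ φ ∈ l, TSat A g φ := by
  induction l with
  | nil => simp [conjList, TSat, Formula.verum, Formula.neg]
  | cons φ l ih =>
    simp only [conjList, List.foldr_cons, TSat, List.mem_cons] at ih ⊢
    constructor
    · rintro ⟨h1, h2⟩ ψ (rfl | hψ)
      · exact h1
      · exact ih.mp h2 ψ hψ
    · intro h
      exact ⟨h φ (Or.inl rfl), ih.mpr fun ψ hψ => h ψ (Or.inr hψ)⟩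

lemma mem_distinctList {n : ℕ} {φ : Formula sigAB}
    (h : φ ∈ (List.range n).flatMap fun i => (List.range n).filterMap fun j =>
      if i < j then some ((Formula.eq (.var i) (.var j)).neg) else none) :
    ∃ i j, i < n ∧ j < n ∧ i < j ∧ φ = (Formula.eq (.var i) (.var j)).neg := by
  simp only [List.mem_flatMap, List.mem_filterMap, List.mem_range] at h
  obtain ⟨i, hi, j, hj, hij⟩ := h
  by_cases hlt : i < j
  · rw [if_pos hlt] at hij
    exact ⟨i, j, hi, hj, hlt, (Option.some_inj.mp hij).symm⟩
  · rw [if_neg hlt] at hij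
    exact absurd hij (by simp)

lemma rigid_conjList (l : List (Formula sigAB)) (h : ∀ φ ∈ l, Rigid φ) :
    Rigid (conjList l) := by
  induction l with
  | nil => exact ⟨trivial, trivial⟩
  | cons φ l ih =>
    exact ⟨h φ List.mem_cons_self, ih fun ψ hψ => h ψ (List.mem_cons_of_mem φ hψ)⟩

lemma rigid_distinctFm (n : ℕ) : Rigid (distinctFm n) := by
  refine rigid_conjList _ fun φ hφ => ?_
  obtain ⟨i, j, _, _, _, rfl⟩ := mem_distinctList hφ
  exact ⟨⟨⟨i, rfl⟩, ⟨j, rfl⟩⟩, trivial⟩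

lemma rigid_foldr (ψ : Formula sigAB) (h : Rigid ψ) (l : List ℕ) :
    Rigid (l.foldr cExists ψ) := by
  induction l with
  | nil => exact h
  | cons x l ih => exact ⟨⟨ih, trivial⟩, trivial⟩

lemma rigid_chi (n : ℕ) : Rigid (chi n) := rigid_foldr _ (rigid_distinctFm n) _

lemma support_chi (D : Type) (hD : Nonempty D) [Finite D] (n : ℕ)
    (hn : n ≤ Nat.card D) (s : Set (canonModel D hD).W) (g : ℕ → D) :
    Support (canonModel D hD) s g (chi n) := by
  refine (rigid_support D hD _ (rigid_chi n) s g).mpr (Or.inr ?_)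
  rw [chi]
  refine (tsat_foldr (strucD D hD) (distinctFm n) (List.range n) g).mpr ?_
  obtain ⟨e⟩ : Nonempty (D ≃ Fin (Nat.card D)) := ⟨Finite.equivFinOfCardEq rfl⟩
  refine ⟨fun x => if h : x < n then e.symm (Fin.castLE hn ⟨x, h⟩) else g x, ?_, ?_⟩
  · intro x hx
    have hx' : ¬ x < n := by simpa using hx
    exact dif_neg hx'
  · rw [distinctFm, tsat_conjList]
    intro φ hφ
    obtain ⟨i, j, hi, hj, hij, rfl⟩ := mem_distinctList hφ
    simp only [Formula.neg, TSat, Term.tval]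
    intro h
    have h : e.symm (Fin.castLE hn ⟨i, hi⟩) = e.symm (Fin.castLE hn ⟨j, hj⟩) := by
      have h2 : (if h : i < n then e.symm (Fin.castLE hn ⟨i, h⟩) else g i) =
          (if h : j < n then e.symm (Fin.castLE hn ⟨j, h⟩) else g j) := h
      rwa [dif_pos hi, dif_pos hj] at h2
    have := e.symm.injective h
    have : i = j := by
      have := congrArg Fin.val this
      simpa using this
    omega

section Canon
variable {D : Type} {hD : Nonempty D}

lemma funcI_false (w : (canonModel D hD).W) (as : Fin 0 → D) :
    (canonModel D hD).funcI w false as = w.1 := rfl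

lemma funcI_true (w : (canonModel D hD).W) (as : Fin 0 → D) :
    (canonModel D hD).funcI w true as = w.2 := rfl

lemma eqI_canon (w : (canonModel D hD).W) (a b : D) :
    (canonModel D hD).eqI w a b ↔ a = b := Iff.rfl

lemma support_lamA (u : Set (canonModel D hD).W) (g : ℕ → D) :
    Support (canonModel D hD) u g (lam 0 tA) ↔ ∃ d : D, ∀ w ∈ u, w.1 = d := by
  simp only [lam, Support, Term.val, tA, funcI_false, eqI_canon, Function.update_self]
  constructor
  · rintro ⟨d, hd⟩
    exact ⟨d, fun w hw => (hd w hw).symm⟩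
  · rintro ⟨d, hd⟩
    exact ⟨d, fun w hw => (hd w hw).symm⟩

lemma support_lamB (u : Set (canonModel D hD).W) (g : ℕ → D) :
    Support (canonModel D hD) u g (lam 0 tB) ↔ ∃ d : D, ∀ w ∈ u, w.2 = d := by
  simp only [lam, Support, Term.val, tB, funcI_true, eqI_canon, Function.update_self]
  constructor
  · rintro ⟨d, hd⟩
    exact ⟨d, fun w hw => (hd w hw).symm⟩
  · rintro ⟨d, hd⟩
    exact ⟨d, fun w hw => (hd w hw).symm⟩

lemma support_iexNeB (u : Set (canonModel D hD).W) (g : ℕ → D) :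
    Support (canonModel D hD) u g (iexNe tB) ↔ ∃ d : D, ∀ w ∈ u, w.2 ≠ d := by
  simp only [iexNe, neTm, Formula.neg, Support, Term.val, tB, funcI_true, eqI_canon,
    Function.update_self]
  constructor
  · rintro ⟨d, hd⟩
    refine ⟨d, fun w hw hwd => ?_⟩
    have := hd {w} (Set.singleton_subset_iff.mpr hw)
      (fun w' hw' => by rcases hw' with rfl; exact hwd.symm)
    exact Set.singleton_ne_empty w this
  · rintro ⟨d, hd⟩
    refine ⟨d, fun t ht hsup => ?_⟩
    rw [Set.eq_empty_iff_forall_notMem]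
    intro w hw
    exact hd w (ht hw) (hsup w hw).symm

lemma support_iexNeA (u : Set (canonModel D hD).W) (g : ℕ → D) :
    Support (canonModel D hD) u g (iexNe tA) ↔ ∃ d : D, ∀ w ∈ u, w.1 ≠ d := by
  simp only [iexNe, neTm, Formula.neg, Support, Term.val, tA, funcI_false, eqI_canon,
    Function.update_self]
  constructor
  · rintro ⟨d, hd⟩
    refine ⟨d, fun w hw hwd => ?_⟩
    have := hd {w} (Set.singleton_subset_iff.mpr hw)
      (fun w' hw' => by rcases hw' with rfl; exact hwd.symm)
    exact Set.singleton_ne_empty w this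
  · rintro ⟨d, hd⟩
    refine ⟨d, fun t ht hsup => ?_⟩
    rw [Set.eq_empty_iff_forall_notMem]
    intro w hw
    exact hd w (ht hw) (hsup w hw).symm

lemma support_eta (D : Type) (hD : Nonempty D) [Finite D] (g : ℕ → D) :
    Support (canonModel D hD) Set.univ g etaAB := by
  show ∀ t ⊆ Set.univ, _ → _
  intro t _ hant
  obtain ⟨h1, h2, h3⟩ : Support (canonModel D hD) t g _ ∧
      Support (canonModel D hD) t g _ ∧ Support (canonModel D hD) t g (iexNe tB) := hant
  rw [support_iexNeA]
  obtain ⟨e, he⟩ := (support_iexNeB t g).mp h3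
  by_contra hno
  push_neg at hno
  choose w hw hw1 using hno
  set F : D → D := fun d => (w d).2 with hF
  have hFe : ∀ d, F d ≠ e := fun d => he (w d) (hw d)
  have hFinj : Function.Injective F := by
    intro d d' hdd
    have hsub : {w d, w d'} ⊆ t := by
      intro x hx
      rcases hx with rfl | hx
      · exact hw d
      · rcases hx with rfl
        exact hw d'
    have hlamB : Support (canonModel D hD) {w d, w d'} g (lam 0 tB) := by
      rw [support_lamB]
      refine ⟨F d, fun x hx => ?_⟩
      rcases hx with rfl | hx
      · rfl
      · rcases hx with rfl
        exact hdd.symm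
    have hlamA := h2 {w d, w d'} hsub hlamB
    rw [support_lamA] at hlamA
    obtain ⟨c, hc⟩ := hlamA
    have hd1 : (w d).1 = c := hc (w d) (Set.mem_insert _ _)
    have hd2 : (w d').1 = c := hc (w d') (Set.mem_insert_of_mem _ rfl)
    rw [hw1 d] at hd1
    rw [hw1 d'] at hd2
    rw [hd1, hd2]
  obtain ⟨d, hd⟩ := (Finite.injective_iff_surjective.mp hFinj) e
  exact hFe d hd

lemma not_support_theta (D : Type) (hD : Nonempty D) (g : ℕ → D) :
    ¬ Support (canonModel D hD) Set.univ g thetaAB := by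
  rintro ⟨d0, d1, h⟩
  have hsup : Support (canonModel D hD) {((d0, d1) : D × D)}
      (Function.update (Function.update g 0 d0) 1 d1)
      (Formula.conj (.eq (.var 0) tA) (.eq (.var 1) tB)) := by
    constructor
    · rintro w rfl
      show Function.update (Function.update g 0 d0) 1 d1 0 = d0
      exact (Function.update_of_ne (show (0:ℕ) ≠ 1 by norm_num) ..).trans (Function.update_self ..)
    · rintro w rfl
      show Function.update (Function.update g 0 d0) 1 d1 1 = d1
      exact Function.update_self ..
  have := h {((d0, d1) : D × D)} (Set.subset_univ _) hsup
  exact Set.singleton_ne_empty _ this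

lemma canon_isId (D : Type) (hD : Nonempty D) : (canonModel D hD).IsId :=
  fun _ _ _ => Iff.rfl

end Canon

/-- For every finite X₀ ⊆ X, X₀ ∪ {η} does not id-entail θ; moreover the
canonical full id-model over a domain with k+1 elements (k the largest n with χₙ ∈ X₀)
supports every member of X₀ and η, but not θ. -/
theorem finite_subsets_do_not_entail_theta (X₀ : Set (Formula sigAB))
    (hsub : X₀ ⊆ Set.range chi) (hfin : X₀.Finite) :
    (¬ EntailsId (X₀ ∪ {etaAB}) thetaAB) ∧
    (∀ k : ℕ, chi k ∈ X₀ → (∀ n, chi n ∈ X₀ → n ≤ k) →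
      ∀ (D : Type) (hD : Nonempty D), Nat.card D = k + 1 →
        (∀ φ ∈ X₀, ∀ g : ℕ → D, Support (canonModel D hD) Set.univ g φ) ∧
        (∀ g : ℕ → D, Support (canonModel D hD) Set.univ g etaAB) ∧
        (∀ g : ℕ → D, ¬ Support (canonModel D hD) Set.univ g thetaAB)) := by
  classical
  have main : ∀ (k : ℕ), (∀ n, chi n ∈ X₀ → n ≤ k) →
      ∀ (D : Type) (hD : Nonempty D), Nat.card D = k + 1 →
        (∀ φ ∈ X₀, ∀ g : ℕ → D, Support (canonModel D hD) Set.univ g φ) ∧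
        (∀ g : ℕ → D, Support (canonModel D hD) Set.univ g etaAB) ∧
        (∀ g : ℕ → D, ¬ Support (canonModel D hD) Set.univ g thetaAB) := by
    intro k hmax D hD hcard
    haveI : Finite D := Nat.finite_of_card_ne_zero (by omega)
    refine ⟨?_, fun g => support_eta D hD g, fun g => not_support_theta D hD g⟩
    intro φ hφ g
    obtain ⟨n, rfl⟩ := hsub hφ
    exact support_chi D hD n (by have := hmax n hφ; omega) _ g
  refine ⟨?_, fun k _ hmax => main k hmax⟩
  set f : Formula sigAB → ℕ := fun φ => if h : ∃ n, chi n = φ then h.choose else 0 with hf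
  set k := hfin.toFinset.sup f with hk
  have hchi : ∀ φ ∈ X₀, chi (f φ) = φ := by
    intro φ hφ
    have h : ∃ n, chi n = φ := hsub hφ
    simp only [hf, dif_pos h]
    exact h.choose_spec
  have hle : ∀ φ ∈ X₀, f φ ≤ k := fun φ hφ =>
    Finset.le_sup (hfin.mem_toFinset.mpr hφ)
  intro hEnt
  have hD : Nonempty (Fin (k + 1)) := ⟨0⟩
  have hcard : Nat.card (Fin (k + 1)) = k + 1 := by simp
  have g0 : ℕ → Fin (k + 1) := fun _ => 0
  refine not_support_theta (Fin (k + 1)) hD (fun _ => (0 : Fin (k + 1)))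
    (hEnt (canonModel (Fin (k + 1)) hD) (canon_isId _ _) Set.univ
      (fun _ => (0 : Fin (k + 1))) ?_)
  intro φ hφ
  rcases hφ with hφ | hφ
  · rw [← hchi φ hφ]
    exact support_chi (Fin (k + 1)) hD (f φ)
      (by rw [hcard]; exact Nat.le_succ_of_le (hle φ hφ)) _ _
  · rcases hφ with rfl
    exact support_eta (Fin (k + 1)) hD _


end InqBQ
end

section
/- InqBQ is not entailment-compact relative to id-models: there exist a set of formulas Φ and a formula ψ such that Φ ⊨_id ψ, but for every finite Φ₀ ⊆ Φ, Φ₀ ⊭_id ψ. -/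
namespace InqBQ

variable {σ : Sig}

/-! ### Auxiliary development for non-compactness -/

section Aux

open Function

/-- `x ≠ var (m-1) ∧ … ∧ x ≠ var 0` (as a nested conjunction). -/
def distinctFrom (x : ℕ) : ℕ → Formula sigAB
  | 0 => Formula.verum
  | m+1 => .conj (Formula.neg (.eq (.var x) (.var m))) (distinctFrom x m)

/-- `chainFm k j` : `∃̷ x_k (x_k ≠ x_{k-1},…,x_0 ∧ chainFm (k+1) j)` -/
def chainFm : ℕ → ℕ → Formula sigAB
  | _, 0 => Formula.verum
  | k, j+1 => .iex k (.conj (distinctFrom k k) (chainFm (k+1) j))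

/-- Every formula is supported at the empty state. -/
lemma support_empty {σ : Sig} (M : Model σ) (g : ℕ → M.D) (φ : Formula σ) :
    Support M ∅ g φ := by
  induction φ generalizing g with
  | pred P ts => intro w hw; exact absurd hw (Set.notMem_empty w)
  | eq t t' => intro w hw; exact absurd hw (Set.notMem_empty w)
  | falsum => simp only [Support]
  | conj φ ψ ih1 ih2 => exact ⟨ih1 g, ih2 g⟩
  | idisj φ ψ ih1 ih2 => exact Or.inl (ih1 g)
  | impl φ ψ ih1 ih2 =>
      intro t ht _
      rw [Set.subset_empty_iff] at ht; subst ht; exact ih2 g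
  | all x φ ih => intro d; exact ih _
  | iex x φ ih => obtain ⟨d⟩ := M.dNonempty; exact ⟨d, ih _⟩

lemma support_verum {σ : Sig} (M : Model σ) (s : Set M.W) (g : ℕ → M.D) :
    Support M s g Formula.verum := by
  simp only [Formula.verum, Formula.neg, Support]
  intro t _ h; exact h

lemma val_tA (M : Model sigAB) (w : M.W) (g : ℕ → M.D) :
    Term.val M w g tA = aVal M w :=
  congrArg (M.funcI w false) (funext fun i => i.elim0)

lemma val_tB (M : Model sigAB) (w : M.W) (g : ℕ → M.D) :
    Term.val M w g tB = bVal M w :=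
  congrArg (M.funcI w true) (funext fun i => i.elim0)

lemma funcI_false_s15 (M : Model sigAB) (w : M.W) (h : Fin (sigAB.farity false) → M.D) :
    M.funcI w false h = aVal M w :=
  congrArg (M.funcI w false) (funext fun i => i.elim0)

lemma funcI_true_s15 (M : Model sigAB) (w : M.W) (h : Fin (sigAB.farity true) → M.D) :
    M.funcI w true h = bVal M w :=
  congrArg (M.funcI w true) (funext fun i => i.elim0)

/-- Support of a negated equation, in id-models. -/
lemma support_neg_eq_iff {M : Model sigAB} (hId : M.IsId) {u : Set M.W} {g : ℕ → M.D}
    (t t' : Term sigAB) :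
    Support M u g (Formula.neg (.eq t t')) ↔ ∀ w ∈ u, Term.val M w g t ≠ Term.val M w g t' := by
  simp only [Formula.neg, Support]
  constructor
  · intro h w hw heq
    have h1 : ∀ w' ∈ ({w} : Set M.W), M.eqI w' (Term.val M w' g t) (Term.val M w' g t') := by
      intro w' hw'
      rcases Set.mem_singleton_iff.mp hw' with rfl
      rw [hId]; exact heq
    have := h {w} (Set.singleton_subset_iff.mpr hw) h1
    exact Set.singleton_ne_empty w this
  · intro h u' hu' hsup
    rw [Set.eq_empty_iff_forall_notMem]
    intro w hw
    exact h w (hu' hw) ((hId w _ _).mp (hsup w hw))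

lemma support_distinctFrom_mp {M : Model sigAB} (hId : M.IsId) {s : Set M.W}
    (hs : s.Nonempty) (x : ℕ) :
    ∀ (m : ℕ) (g : ℕ → M.D), Support M s g (distinctFrom x m) → ∀ i < m, g x ≠ g i := by
  intro m
  induction m with
  | zero => intro g _ i hi; omega
  | succ m ih =>
      intro g h i hi
      obtain ⟨h1, h2⟩ := h
      rcases Nat.lt_succ_iff_lt_or_eq.mp hi with hi' | rfl
      · exact ih g h2 i hi'
      · have := (support_neg_eq_iff hId (.var x) (.var i)).mp h1
        obtain ⟨w, hw⟩ := hs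
        exact this w hw

lemma support_distinctFrom_of {M : Model sigAB} (hId : M.IsId) (s : Set M.W) (x : ℕ) :
    ∀ (m : ℕ) (g : ℕ → M.D), (∀ i < m, g x ≠ g i) → Support M s g (distinctFrom x m) := by
  intro m
  induction m with
  | zero => intro g _; exact support_verum M s g
  | succ m ih =>
      intro g h
      refine ⟨?_, ih g (fun i hi => h i (by omega))⟩
      exact (support_neg_eq_iff hId (.var x) (.var m)).mpr
        (fun w _ => h m (by omega))

/-- Extracting injections from supported `chainFm`. -/
lemma chain_inj {M : Model sigAB} (hId : M.IsId) {s : Set M.W} (hs : s.Nonempty) :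
    ∀ (j k : ℕ) (g : ℕ → M.D), Support M s g (chainFm k j) →
      ∃ g' : ℕ → M.D, (∀ i, i < k → g' i = g i) ∧
        ∀ i₂, k ≤ i₂ → i₂ < k + j → ∀ i₁ < i₂, g' i₁ ≠ g' i₂ := by
  intro j
  induction j with
  | zero =>
      intro k g _
      exact ⟨g, fun _ _ => rfl, fun i₂ h1 h2 => by omega⟩
  | succ j ih =>
      intro k g h
      obtain ⟨d, hd1, hd2⟩ := h
      obtain ⟨g', hg1, hg2⟩ := ih (k+1) _ hd2
      refine ⟨g', fun i hi => (hg1 i (by omega)).trans (update_of_ne (by omega) _ _), ?_⟩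
      intro i₂ hk hlt i₁ hi₁
      rcases eq_or_lt_of_le hk with rfl | hk'
      · have hgk : g' k = d := (hg1 k (by omega)).trans (update_self _ _ _)
        have hgi : g' i₁ = g i₁ :=
          (hg1 i₁ (by omega)).trans (update_of_ne (by omega) _ _)
        have hdis := support_distinctFrom_mp hId hs k k _ hd1 i₁ hi₁
        rw [update_self, update_of_ne (show i₁ ≠ k by omega)] at hdis
        rw [hgk, hgi]
        exact fun he => hdis he.symm
      · exact hg2 i₂ hk' (by omega) i₁ hi₁

lemma exists_fresh {D : Type} {c k : ℕ} (e : Fin c → D) (he : Function.Injective e)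
    (hk : k < c) (g : ℕ → D) : ∃ d : D, ∀ i < k, d ≠ g i := by
  classical
  by_contra hcon
  push_neg at hcon
  have hmem : ∀ x : Fin c, e x ∈ (Finset.range k).image g := by
    intro x
    obtain ⟨i, hi, hei⟩ := hcon (e x)
    exact Finset.mem_image.mpr ⟨i, Finset.mem_range.mpr hi, hei.symm⟩
  have hcard := Finset.card_le_card_of_injOn (s := Finset.univ)
    (t := (Finset.range k).image g) e (fun a _ => hmem a) (fun a _ b _ hab => he hab)
  have h2 : ((Finset.range k).image g).card ≤ k := by
    calc ((Finset.range k).image g).card ≤ (Finset.range k).card := Finset.card_image_le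
    _ = k := Finset.card_range k
  rw [Finset.card_univ, Fintype.card_fin] at hcard
  omega

/-- `chainFm` is supported if the domain is large enough. -/
lemma chain_support {M : Model sigAB} (hId : M.IsId) (s : Set M.W) {c : ℕ}
    (e : Fin c → M.D) (he : Function.Injective e) :
    ∀ (j k : ℕ) (g : ℕ → M.D), k + j ≤ c → Support M s g (chainFm k j) := by
  intro j
  induction j with
  | zero => intro k g _; exact support_verum M s g
  | succ j ih =>
      intro k g hc
      obtain ⟨d, hd⟩ := exists_fresh e he (show k < c by omega) g
      refine ⟨d, ?_, ih (k+1) _ (by omega)⟩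
      apply support_distinctFrom_of hId s k k
      intro i hi
      rw [update_self, update_of_ne (show i ≠ k by omega)]
      exact hd i hi

lemma dedekind {D : Type} [Infinite D] :
    ∃ f : D → D, Function.Injective f ∧ ¬ Function.Surjective f := by
  classical
  let F := Infinite.natEmbedding D
  refine ⟨fun x => if h : ∃ n, F n = x then F (Nat.find h + 1) else x, ?_, ?_⟩
  · intro x y hxy
    by_cases hx : ∃ n, F n = x <;> by_cases hy : ∃ n, F n = y
    · simp only [dif_pos hx, dif_pos hy] at hxy
      have h1 := F.injective hxy
      have hx' := Nat.find_spec hx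
      have hy' := Nat.find_spec hy
      have h2 : Nat.find hx = Nat.find hy := by omega
      rw [← hx', ← hy', h2]
    · simp only [dif_pos hx, dif_neg hy] at hxy
      exact absurd ⟨_, hxy⟩ hy
    · simp only [dif_neg hx, dif_pos hy] at hxy
      exact absurd ⟨_, hxy.symm⟩ hx
    · simpa only [dif_neg hx, dif_neg hy] using hxy
  · intro hs
    obtain ⟨x, hx⟩ := hs (F 0)
    by_cases h : ∃ n, F n = x
    · simp only [dif_pos h] at hx
      have := F.injective hx
      omega
    · simp only [dif_neg h] at hx
      exact h ⟨0, hx.symm⟩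

lemma infinite_of_injections {D : Type} [Nonempty D]
    (h : ∀ n, ∃ e : Fin n → D, Function.Injective e) : Infinite D := by
  by_contra hfin
  rw [not_infinite_iff_finite] at hfin
  have := Fintype.ofFinite D
  obtain ⟨e, he⟩ := h (Fintype.card D + 1)
  have := Fintype.card_le_of_injective e he
  simp [Fintype.card_fin] at this

/-- Main support lemma: over an id-model with a Dedekind-infinite domain,
`η → θ` is supported at every state. -/
lemma eta_theta (M : Model sigAB) (hId : M.IsId)
    (hinf : ∃ f : M.D → M.D, Function.Injective f ∧ ¬ Function.Surjective f)
    (s : Set M.W) (g : ℕ → M.D) : Support M s g (Formula.impl etaAB thetaAB) := by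
  obtain ⟨f, hfinj, hfns⟩ := hinf
  intro t _ hη
  by_contra hθ
  have full : ∀ d e : M.D, ∃ w ∈ t, aVal M w = d ∧ bVal M w = e := by
    intro d e
    by_contra hne
    push_neg at hne
    apply hθ
    refine ⟨d, e, ?_⟩
    intro u hu hsup
    show u = ∅
    rw [Set.eq_empty_iff_forall_notMem]
    intro w hw
    obtain ⟨h1, h2⟩ := hsup
    have ha := (hId w _ _).mp (h1 w hw)
    have hb := (hId w _ _).mp (h2 w hw)
    simp only [Term.val, update_self, update_of_ne (show (0:ℕ) ≠ 1 by omega),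
      val_tA, val_tB, funcI_false_s15, funcI_true_s15] at ha hb
    exact hne w (hu hw) ha.symm hb.symm
  set t' : Set M.W := {w | w ∈ t ∧ bVal M w = f (aVal M w)} with ht'def
  have ht't : t' ⊆ t := fun w hw => hw.1
  have hant : Support M t' g
      (.conj (.impl (lam 0 tA) (lam 0 tB)) (.conj (.impl (lam 0 tB) (lam 0 tA)) (iexNe tB))) := by
    refine ⟨?_, ?_, ?_⟩
    · intro u hu hlam
      obtain ⟨d, hd⟩ := hlam
      refine ⟨f d, ?_⟩
      intro w hw
      rw [hId]
      have hd' := (hId w _ _).mp (hd w hw)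
      simp only [Term.val, update_self, val_tA, val_tB, funcI_false_s15, funcI_true_s15] at hd' ⊢
      have hw' : w ∈ t' := hu hw
      rw [hw'.2, ← hd']
    · intro u hu hlam
      obtain ⟨e, he⟩ := hlam
      rcases Set.eq_empty_or_nonempty u with rfl | ⟨w₀, hw₀⟩
      · obtain ⟨d⟩ := M.dNonempty
        exact ⟨d, fun w hw => absurd hw (Set.notMem_empty w)⟩
      · refine ⟨aVal M w₀, ?_⟩
        intro w hw
        rw [hId]
        have he1 := (hId w _ _).mp (he w hw)
        have he0 := (hId w₀ _ _).mp (he w₀ hw₀)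
        simp only [Term.val, update_self, val_tB, funcI_false_s15, funcI_true_s15] at he1 he0
        simp only [Term.val, update_self, val_tA, funcI_false_s15, funcI_true_s15]
        have hwt : w ∈ t' := hu hw
        have hw0t : w₀ ∈ t' := hu hw₀
        have : f (aVal M w₀) = f (aVal M w) := by
          rw [← hw0t.2, ← hwt.2, ← he0, ← he1]
        exact (hfinj this)
    · simp only [Function.Surjective, not_forall, not_exists] at hfns
      obtain ⟨d, hd⟩ := hfns
      refine ⟨d, (support_neg_eq_iff hId _ _).mpr ?_⟩
      intro w hw
      simp only [Term.val, update_self, val_tB, funcI_false_s15, funcI_true_s15]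
      intro hcon
      exact hd (aVal M w) (by rw [← hw.2, ← hcon])
  have hcons := hη t' ht't hant
  obtain ⟨d, hd⟩ := hcons
  have hd' := (support_neg_eq_iff hId _ _).mp hd
  obtain ⟨w, hw, hwa, hwb⟩ := full d (f d)
  have hwt' : w ∈ t' := ⟨hw, by rw [hwb, hwa]⟩
  have := hd' w hwt'
  simp only [Term.val, update_self, val_tA, funcI_false_s15, funcI_true_s15] at this
  exact this hwa.symm

/-- In the canonical model over a finite type, `η → θ` fails at the full state. -/
lemma counter (N : ℕ) :
    ¬ Support (canonModel (Fin (N+1)) ⟨0⟩) Set.univ (fun _ => (0 : Fin (N+1)))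
      (Formula.impl etaAB thetaAB) := by
  classical
  intro h
  set M := canonModel (Fin (N+1)) ⟨0⟩ with hM
  have hId : M.IsId := fun _ _ _ => Iff.rfl
  have haVal : ∀ w : M.W, aVal M w = w.1 := fun w => rfl
  have hbVal : ∀ w : M.W, bVal M w = w.2 := fun w => rfl
  have heta : Support M Set.univ (fun _ => (0 : Fin (N+1))) etaAB := by
    intro u _ hant
    obtain ⟨h1, h2, h3⟩ := hant
    by_contra hcon
    have hall : ∀ d : Fin (N+1), ∃ w ∈ u, w.1 = d := by
      intro d
      by_contra hnd
      push_neg at hnd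
      apply hcon
      refine ⟨d, (support_neg_eq_iff hId _ _).mpr ?_⟩
      intro w hw
      simp only [Term.val, update_self, val_tA, funcI_false_s15, funcI_true_s15, haVal]
      exact fun he => hnd w hw (he.symm)
    choose wit hwitu hwit1 using hall
    have hFinj : Function.Injective (fun d => (wit d).2) := by
      intro d d' hdd
      simp only at hdd
      have hsub : ({wit d, wit d'} : Set M.W) ⊆ u := by
        intro w hw
        rcases hw with rfl | hw
        · exact hwitu d
        · rcases hw with rfl; exact hwitu d'
      have hlamb : Support M ({wit d, wit d'} : Set M.W) (fun _ => (0 : Fin (N+1))) (lam 0 tB) := by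
        refine ⟨(wit d).2, ?_⟩
        intro w hw
        rw [hId]
        simp only [Term.val, update_self, val_tB, funcI_false_s15, funcI_true_s15, hbVal]
        rcases hw with rfl | hw
        · rfl
        · rcases hw with rfl; exact hdd
      obtain ⟨d₀, hd₀⟩ := h2 _ hsub hlamb
      have e1 := (hId _ _ _).mp (hd₀ (wit d) (Set.mem_insert _ _))
      have e2 := (hId _ _ _).mp (hd₀ (wit d') (Set.mem_insert_of_mem _ rfl))
      simp only [Term.val, update_self, val_tA, funcI_false_s15, funcI_true_s15, haVal] at e1 e2
      rw [← hwit1 d, ← hwit1 d', ← e1, ← e2]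
    have hFsurj := Finite.injective_iff_surjective.mp hFinj
    obtain ⟨e, he⟩ := h3
    have he' := (support_neg_eq_iff hId _ _).mp he
    obtain ⟨d, hd⟩ := hFsurj e
    have := he' (wit d) (hwitu d)
    simp only [Term.val, update_self, val_tB, funcI_false_s15, funcI_true_s15, hbVal] at this
    exact this hd.symm
  have hθ := h Set.univ (subset_refl _) heta
  obtain ⟨d, e, hneg⟩ := hθ
  have hsup : Support M ({(d, e)} : Set M.W)
      (Function.update (Function.update (fun _ => (0 : Fin (N+1))) 0 d) 1 e)
      (.conj (.eq (.var 0) tA) (.eq (.var 1) tB)) := by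
    constructor
    · intro w hw
      rcases Set.mem_singleton_iff.mp hw with rfl
      refine (hId _ _ _).mpr ?_
      simp only [Term.val, update_self, update_of_ne (show (0:ℕ) ≠ 1 by omega), val_tA, funcI_false_s15, funcI_true_s15, haVal]
      rfl
    · intro w hw
      rcases Set.mem_singleton_iff.mp hw with rfl
      refine (hId _ _ _).mpr ?_
      simp only [Term.val, update_self, val_tB, funcI_false_s15, funcI_true_s15, hbVal]
      rfl
  have := hneg {(d, e)} (Set.subset_univ _) hsup
  exact Set.singleton_ne_empty _ this

end Aux

/-- InqBQ is not entailment-compact relative to id-models. -/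
theorem inqbq_not_id_compact :
    ∃ (Φ : Set (Formula sigAB)) (ψ : Formula sigAB),
      EntailsId Φ ψ ∧ ∀ Φ₀ ⊆ Φ, Φ₀.Finite → ¬ EntailsId Φ₀ ψ := by
  classical
  refine ⟨Set.range (fun n => chainFm 0 n), Formula.impl etaAB thetaAB, ?_, ?_⟩
  · intro M hId s g hsupp
    rcases Set.eq_empty_or_nonempty s with rfl | hs
    · exact support_empty M g _
    · have hinj : ∀ n, ∃ e : Fin n → M.D, Function.Injective e := by
        intro n
        have h := hsupp _ ⟨n, rfl⟩
        obtain ⟨g', _, hg2⟩ := chain_inj hId hs n 0 g h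
        refine ⟨fun i => g' i, ?_⟩
        intro i j hij
        by_contra hne
        have hne' : (i : ℕ) ≠ (j : ℕ) := fun hc => hne (Fin.ext hc)
        rcases hne'.lt_or_gt with hlt | hlt
        · exact hg2 j (Nat.zero_le _) (by omega) i hlt hij
        · exact hg2 i (Nat.zero_le _) (by omega) j hlt hij.symm
      have : Nonempty M.D := M.dNonempty
      have : Infinite M.D := infinite_of_injections hinj
      exact eta_theta M hId dedekind s g
  · intro Φ₀ hsub hfin hent
    have hidx : ∀ φ ∈ Φ₀, ∃ n, chainFm 0 n = φ := fun φ hφ => hsub hφ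
    choose! idx hidxs using hidx
    obtain ⟨N, hN⟩ := (hfin.image idx).bddAbove
    have hNb : ∀ φ ∈ Φ₀, idx φ ≤ N := fun φ hφ => hN (Set.mem_image_of_mem idx hφ)
    apply counter N
    apply hent (canonModel (Fin (N+1)) ⟨0⟩) (fun _ _ _ => Iff.rfl) Set.univ (fun _ => (0 : Fin (N+1)))
    intro φ hφ
    rw [← hidxs φ hφ]
    exact chain_support (M := canonModel (Fin (N+1)) ⟨0⟩) (c := N+1)
      (fun _ _ _ => Iff.rfl) Set.univ id Function.injective_id (idx φ) 0
      (fun _ => (0 : Fin (N+1))) (by have := hNb φ hφ; omega)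

end InqBQ
end

section
/- Reduction of finite validity to InqBQ validity: for every first-order sentence α in a signature Σ not containing the constants a,b, the following are equivalent: (1) α is finitely valid (true in every finite relational structure for Σ); (2) the formula η → (α ⩒ θ) is id-valid in InqBQ over the signature Σ∪{a,b}; (3) the formula (ρ ∧ η) → (α ⩒ θ) is valid in InqBQ over the signature Σ∪{a,b}, where ρ := ∀x∀y?(x=y). -/
namespace InqBQ

variable {σ : Sig}

section Proof

variable {σ : Sig}

/-! ### Values of the constants a, b -/

/-- value of constant a at a world -/
def aV (M : Model (sigExt σ)) (w : M.W) : M.D := M.funcI w (.inr false) Fin.elim0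

/-- value of constant b at a world -/
def bV (M : Model (sigExt σ)) (w : M.W) : M.D := M.funcI w (.inr true) Fin.elim0

lemma val_extA (M : Model (sigExt σ)) (w : M.W) (g : ℕ → M.D) :
    Term.val M w g extA = aV M w := by
  show M.funcI w _ _ = M.funcI w _ _
  congr 1; funext i; exact i.elim0

lemma val_extB (M : Model (sigExt σ)) (w : M.W) (g : ℕ → M.D) :
    Term.val M w g extB = bV M w := by
  show M.funcI w _ _ = M.funcI w _ _
  congr 1; funext i; exact i.elim0

/-! ### Support unfolding lemmas -/

lemma upd2_zero {β : Type*} (h : ℕ → β) (d e : β) :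
    Function.update (Function.update h 0 d) 1 e 0 = d := by
  rw [Function.update_of_ne (by decide : (0:ℕ) ≠ 1), Function.update_self]

lemma upd2_one {β : Type*} (h : ℕ → β) (d e : β) :
    Function.update (Function.update h 0 d) 1 e 1 = e := Function.update_self _ _ _

lemma forall_subset_eq_empty_iff {W : Type*} (s : Set W) (p : W → Prop) :
    (∀ t ⊆ s, (∀ w ∈ t, p w) → t = ∅) ↔ ∀ w ∈ s, ¬ p w := by
  constructor
  · intro h w hw pw
    have h2 := h {w} (by simpa using hw) (by rintro w' rfl; exact pw)
    simp at h2
  · intro h t ht hp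
    exact Set.eq_empty_iff_forall_notMem.mpr fun w hw => h w (ht hw) (hp w hw)

lemma forall_subset_eq_empty_iff₂ {W : Type*} (s : Set W) (p q : W → Prop) :
    (∀ t ⊆ s, ((∀ w ∈ t, p w) ∧ (∀ w ∈ t, q w)) → t = ∅) ↔
      ∀ w ∈ s, ¬ (p w ∧ q w) := by
  constructor
  · intro h w hw pw
    have h2 := h {w} (by simpa using hw)
      ⟨by rintro w' rfl; exact pw.1, by rintro w' rfl; exact pw.2⟩
    simp at h2
  · intro h t ht hp
    exact Set.eq_empty_iff_forall_notMem.mpr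
      fun w hw => h w (ht hw) ⟨hp.1 w hw, hp.2 w hw⟩

lemma support_neg_eq (M : Model (sigExt σ)) (s : Set M.W) (g : ℕ → M.D)
    (t t' : Term (sigExt σ)) :
    Support M s g (Formula.neg (.eq t t')) ↔
      ∀ w ∈ s, ¬ M.eqI w (t.val M w g) (t'.val M w g) := by
  simp only [Formula.neg, Support]
  exact forall_subset_eq_empty_iff s _

lemma support_lam_a (M : Model (sigExt σ)) (s : Set M.W) (g : ℕ → M.D) :
    Support M s g (lam 0 extA) ↔ ∃ d, ∀ w ∈ s, M.eqI w d (aV M w) := by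
  simp only [lam, Support]
  simp only [val_extA]
  simp only [Term.val, Function.update_self]

lemma support_lam_b (M : Model (sigExt σ)) (s : Set M.W) (g : ℕ → M.D) :
    Support M s g (lam 0 extB) ↔ ∃ d, ∀ w ∈ s, M.eqI w d (bV M w) := by
  simp only [lam, Support]
  simp only [val_extB]
  simp only [Term.val, Function.update_self]

lemma support_iexNe_a (M : Model (sigExt σ)) (s : Set M.W) (g : ℕ → M.D) :
    Support M s g (iexNe extA) ↔ ∃ d, ∀ w ∈ s, ¬ M.eqI w d (aV M w) := by
  simp only [iexNe, neTm, Formula.neg, Support]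
  simp only [val_extA]
  simp only [Term.val, Function.update_self]
  simp only [forall_subset_eq_empty_iff]

lemma support_iexNe_b (M : Model (sigExt σ)) (s : Set M.W) (g : ℕ → M.D) :
    Support M s g (iexNe extB) ↔ ∃ d, ∀ w ∈ s, ¬ M.eqI w d (bV M w) := by
  simp only [iexNe, neTm, Formula.neg, Support]
  simp only [val_extB]
  simp only [Term.val, Function.update_self]
  simp only [forall_subset_eq_empty_iff]

lemma support_theta (M : Model (sigExt σ)) (s : Set M.W) (g : ℕ → M.D) :
    Support M s g (thetaOf extA extB) ↔
      ∃ d e, ∀ w ∈ s, ¬ (M.eqI w d (aV M w) ∧ M.eqI w e (bV M w)) := by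
  simp only [thetaOf, Formula.neg, Support]
  simp only [val_extA, val_extB]
  simp only [Term.val, upd2_zero, upd2_one]
  simp only [forall_subset_eq_empty_iff₂]

lemma support_eta_s18 (M : Model (sigExt σ)) (s : Set M.W) (g : ℕ → M.D) :
    Support M s g (etaOf extA extB) ↔
      ∀ t ⊆ s,
        ((∀ u ⊆ t, (∃ d, ∀ w ∈ u, M.eqI w d (aV M w)) →
            ∃ e, ∀ w ∈ u, M.eqI w e (bV M w)) ∧
         (∀ u ⊆ t, (∃ e, ∀ w ∈ u, M.eqI w e (bV M w)) →
            ∃ d, ∀ w ∈ u, M.eqI w d (aV M w)) ∧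
         (∃ e, ∀ w ∈ t, ¬ M.eqI w e (bV M w))) →
        ∃ d, ∀ w ∈ t, ¬ M.eqI w d (aV M w) := by
  simp only [etaOf, lam, iexNe, neTm, Formula.neg, Support]
  simp only [val_extA, val_extB]
  simp only [Term.val, Function.update_self]
  simp only [forall_subset_eq_empty_iff]

lemma support_rho (M : Model (sigExt σ)) (s : Set M.W) (g : ℕ → M.D) :
    Support M s g rho ↔
      ∀ d e : M.D, (∀ w ∈ s, M.eqI w d e) ∨ (∀ w ∈ s, ¬ M.eqI w d e) := by
  simp only [rho, Formula.qm, Formula.neg, Support]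
  simp only [Term.val, upd2_zero, upd2_one]
  simp only [forall_subset_eq_empty_iff]

/-! ### Classical truth lemma for general models -/

/-- The quotient structure at a world, restricted to the base signature. -/
noncomputable def qStruc (M : Model (sigExt σ)) (w : M.W) : Struc σ where
  D := Quotient (M.setoidAt w)
  dNonempty := Nonempty.map (Quotient.mk _) M.dNonempty
  predI P as := ∃ bs : Fin (σ.parity P) → M.D,
    (∀ i, Quotient.mk (M.setoidAt w) (bs i) = as i) ∧ M.predI w P bs
  funcI f as := Quotient.mk (M.setoidAt w) (M.funcI w (.inl f) (fun i => (as i).out))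

lemma tval_qStruc (M : Model (sigExt σ)) (w : M.W) (g : ℕ → M.D) (t : Term σ) :
    t.tval (qStruc M w) (fun n => Quotient.mk (M.setoidAt w) (g n)) =
      Quotient.mk (M.setoidAt w) (Term.val M w g t.lift) := by
  induction t with
  | var n => rfl
  | func f ts ih =>
    show Quotient.mk (M.setoidAt w)
        (M.funcI w (.inl f) (fun i => (Term.tval (qStruc M w) _ (ts i)).out)) = _
    apply Quotient.sound
    refine M.funcCongr w (.inl f) _ _ (fun i => ?_)
    have h1 : Quotient.mk (M.setoidAt w) ((Term.tval (qStruc M w)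
        (fun n => Quotient.mk (M.setoidAt w) (g n)) (ts i)).out) =
        Quotient.mk (M.setoidAt w) (Term.val M w g (ts i).lift) := by
      exact (Quotient.out_eq _).trans (ih i)
    exact Quotient.exact h1

lemma update_mk (M : Model (sigExt σ)) (w : M.W) (g : ℕ → M.D) (x : ℕ) (d : M.D) :
    (fun n => Quotient.mk (M.setoidAt w) (Function.update g x d n)) =
      Function.update (fun n => Quotient.mk (M.setoidAt w) (g n)) x
        (Quotient.mk (M.setoidAt w) d) := by
  funext n
  by_cases h : n = x
  · subst h; simp
  · simp [Function.update_of_ne h]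

lemma classical_support (M : Model (sigExt σ)) (φ : Formula σ) :
    φ.IsClassical → ∀ (s : Set M.W) (g : ℕ → M.D),
      Support M s g φ.lift ↔
        ∀ w ∈ s, TSat (qStruc M w) (fun n => Quotient.mk (M.setoidAt w) (g n)) φ := by
  induction φ with
  | pred P ts =>
    intro _ s g
    show (∀ w ∈ s, M.predI w P _) ↔ ∀ w ∈ s, (qStruc M w).predI P _
    refine forall₂_congr (fun w hw => ?_)
    constructor
    · intro h
      refine ⟨fun i => Term.val M w g (ts i).lift, fun i => (tval_qStruc M w g (ts i)).symm, h⟩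
    · rintro ⟨bs, hbs, hp⟩
      refine (M.predCongr w P _ bs (fun i => ?_)).mpr hp
      have h2 : Quotient.mk (M.setoidAt w) (Term.val M w g (ts i).lift) =
          Quotient.mk (M.setoidAt w) (bs i) := by
        rw [← tval_qStruc M w g (ts i)]
        exact (hbs i).symm
      exact Quotient.exact h2
  | eq t t' =>
    intro _ s g
    show (∀ w ∈ s, M.eqI w _ _) ↔ ∀ w ∈ s, Term.tval _ _ t = Term.tval _ _ t'
    refine forall₂_congr (fun w hw => ?_)
    rw [tval_qStruc, tval_qStruc]
    exact ⟨fun h => Quotient.sound h, fun h => Quotient.exact h⟩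
  | falsum =>
    intro _ s g
    show s = ∅ ↔ ∀ w ∈ s, False
    simp [Set.eq_empty_iff_forall_notMem]
  | conj φ ψ ihφ ihψ =>
    rintro ⟨h1, h2⟩ s g
    show Support M s g φ.lift ∧ Support M s g ψ.lift ↔ _
    rw [ihφ h1 s g, ihψ h2 s g]
    constructor
    · rintro ⟨ha, hb⟩ w hw; exact ⟨ha w hw, hb w hw⟩
    · intro h; exact ⟨fun w hw => (h w hw).1, fun w hw => (h w hw).2⟩
  | idisj φ ψ ihφ ihψ => intro h; exact h.elim
  | impl φ ψ ihφ ihψ =>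
    rintro ⟨h1, h2⟩ s g
    show (∀ t ⊆ s, Support M t g φ.lift → Support M t g ψ.lift) ↔ _
    constructor
    · intro h w hw hφ
      have hsφ : Support M {w} g φ.lift := by
        rw [ihφ h1]
        intro w' hw'; rcases hw' with rfl; exact hφ
      have := h {w} (by simpa using hw) hsφ
      rw [ihψ h2] at this
      exact this w rfl
    · intro h t ht hφ
      rw [ihφ h1] at hφ
      rw [ihψ h2]
      intro w hw
      exact h w (ht hw) (hφ w hw)
  | all x φ ih =>
    intro h1 s g
    show (∀ d : M.D, Support M s (Function.update g x d) φ.lift) ↔ _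
    constructor
    · intro h w hw q
      obtain ⟨d, rfl⟩ := Quotient.exists_rep q
      have := (ih h1 s (Function.update g x d)).mp (h d) w hw
      rwa [update_mk] at this
    · intro h d
      rw [ih h1]
      intro w hw
      rw [update_mk]
      exact h w hw (Quotient.mk (M.setoidAt w) d)
  | iex x φ ih => intro h; exact h.elim

/-! ### Classical truth lemma for the canonical model -/

lemma tval_canon (A : Struc σ) (w : (canonModelOf A).W) (g : ℕ → A.D) (t : Term σ) :
    Term.val (canonModelOf A) w g t.lift = t.tval A g := by
  induction t with
  | var n => rfl
  | func f ts ih =>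
    show A.funcI f _ = A.funcI f _
    exact congrArg _ (funext fun i => ih i)

lemma canon_support (A : Struc σ) (φ : Formula σ) :
    φ.IsClassical → ∀ (s : Set (canonModelOf A).W) (g : ℕ → A.D),
      Support (canonModelOf A) s g φ.lift ↔ ∀ w ∈ s, TSat A g φ := by
  induction φ with
  | pred P ts =>
    intro _ s g
    show (∀ w ∈ s, A.predI P _) ↔ ∀ w ∈ s, A.predI P _
    refine forall₂_congr (fun w hw => ?_)
    simp only [tval_canon]
    exact Iff.rfl
  | eq t t' =>
    intro _ s g
    show (∀ w ∈ s, Term.val _ w g t.lift = Term.val _ w g t'.lift) ↔ _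
    refine forall₂_congr (fun w hw => ?_)
    rw [tval_canon, tval_canon]
    rfl
  | falsum =>
    intro _ s g
    show s = ∅ ↔ ∀ w ∈ s, False
    simp [Set.eq_empty_iff_forall_notMem]
  | conj φ ψ ihφ ihψ =>
    rintro ⟨h1, h2⟩ s g
    show Support _ s g φ.lift ∧ Support _ s g ψ.lift ↔ _
    rw [ihφ h1 s g, ihψ h2 s g]
    constructor
    · rintro ⟨ha, hb⟩ w hw; exact ⟨ha w hw, hb w hw⟩
    · intro h; exact ⟨fun w hw => (h w hw).1, fun w hw => (h w hw).2⟩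
  | idisj φ ψ ihφ ihψ => intro h; exact h.elim
  | impl φ ψ ihφ ihψ =>
    rintro ⟨h1, h2⟩ s g
    show (∀ t ⊆ s, Support _ t g φ.lift → Support _ t g ψ.lift) ↔ _
    constructor
    · intro h w hw hφ
      have hsφ : Support (canonModelOf A) {w} g φ.lift := by
        rw [ihφ h1]
        intro w' hw'; exact hφ
      have := h {w} (by simpa using hw) hsφ
      rw [ihψ h2] at this
      exact this w rfl
    · intro h t ht hφ
      rw [ihφ h1] at hφ
      rw [ihψ h2]
      intro w hw
      exact h w (ht hw) (hφ w hw)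
  | all x φ ih =>
    intro h1 s g
    show (∀ d : A.D, Support _ s (Function.update g x d) φ.lift) ↔ _
    constructor
    · intro h w hw d
      exact (ih h1 s (Function.update g x d)).mp (h d) w hw
    · intro h d
      refine (ih h1 s _).mpr ?_
      intro w hw
      exact h w hw d
  | iex x φ ih => intro h; exact h.elim

/-! ### Finiteness from η, θ -/

lemma exists_inj_not_surj (Q : Type) [Infinite Q] :
    ∃ f : Q → Q, Function.Injective f ∧ ¬ Function.Surjective f := by
  classical
  obtain e := Infinite.natEmbedding Q
  refine ⟨fun q => if h : ∃ n, e n = q then e (h.choose + 1) else q, ?_, ?_⟩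
  · intro q1 q2 heq
    by_cases h1 : ∃ n, e n = q1 <;> by_cases h2 : ∃ n, e n = q2 <;>
      simp only [h1, h2, dif_pos, dif_neg, not_false_iff] at heq
    · have := e.injective heq
      rw [← h1.choose_spec, ← h2.choose_spec, Nat.succ_injective this]
    · exact absurd ⟨_, heq⟩ h2
    · exact absurd ⟨_, heq.symm⟩ h1
    · exact heq
  · intro hsurj
    obtain ⟨q, hq⟩ := hsurj (e 0)
    by_cases h : ∃ n, e n = q <;> simp only [h, dif_pos, dif_neg, not_false_iff] at hq
    · exact Nat.succ_ne_zero _ (e.injective hq)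
    · exact h ⟨0, hq.symm⟩

lemma finite_quotient (M : Model (sigExt σ)) (s : Set M.W) (g : ℕ → M.D)
    (hρ : ∀ d e : M.D, (∀ w ∈ s, M.eqI w d e) ∨ (∀ w ∈ s, ¬ M.eqI w d e))
    (hη : Support M s g (etaOf extA extB))
    (hθ : ¬ Support M s g (thetaOf extA extB)) :
    ∀ w ∈ s, Finite (Quotient (M.setoidAt w)) := by
  classical
  intro w₁ hw₁
  have htr : ∀ w ∈ s, ∀ d e : M.D, M.eqI w d e → M.eqI w₁ d e := by
    intro w hw d e hde
    rcases hρ d e with h | h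
    · exact h w₁ hw₁
    · exact absurd hde (h w hw)
  have htr' : ∀ w ∈ s, ∀ d e : M.D, M.eqI w₁ d e → M.eqI w d e := by
    intro w hw d e hde
    rcases hρ d e with h | h
    · exact h w hw
    · exact absurd hde (h w₁ hw₁)
  rw [support_theta] at hθ
  push_neg at hθ
  by_contra hQ
  rw [not_finite_iff_infinite] at hQ
  obtain ⟨f, hinj, hnsurj⟩ := exists_inj_not_surj (Quotient (M.setoidAt w₁))
  obtain ⟨q₀, hq₀''⟩ := not_forall.mp hnsurj
  have hq₀ : ∀ q, f q ≠ q₀ := fun q h => hq₀'' ⟨q, h⟩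
  have hmkeq : ∀ d e : M.D, Quotient.mk (M.setoidAt w₁) d = Quotient.mk (M.setoidAt w₁) e ↔
      M.eqI w₁ d e :=
    fun d e => ⟨fun h => Quotient.exact h, fun h => Quotient.sound h⟩
  have hout : ∀ q : Quotient (M.setoidAt w₁), Quotient.mk (M.setoidAt w₁) q.out = q :=
    fun q => q.out_eq
  rw [support_eta_s18] at hη
  have hty : {w | w ∈ s ∧ Quotient.mk (M.setoidAt w₁) (bV M w)
      = f (Quotient.mk (M.setoidAt w₁) (aV M w))} ⊆ s := fun w hw => hw.1
  have Hab : ∀ u ⊆ {w | w ∈ s ∧ Quotient.mk (M.setoidAt w₁) (bV M w)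
      = f (Quotient.mk (M.setoidAt w₁) (aV M w))},
      (∃ d, ∀ w ∈ u, M.eqI w d (aV M w)) → ∃ e, ∀ w ∈ u, M.eqI w e (bV M w) := by
    rintro u hu ⟨d, hd⟩
    refine ⟨(f (Quotient.mk (M.setoidAt w₁) d)).out, fun w hw => ?_⟩
    have hws : w ∈ s := (hu hw).1
    have h1 : Quotient.mk (M.setoidAt w₁) (aV M w) = Quotient.mk (M.setoidAt w₁) d :=
      (hmkeq _ _).mpr ((M.eqEquiv w₁).symm (htr w hws _ _ (hd w hw)))
    have h2 : Quotient.mk (M.setoidAt w₁) ((f (Quotient.mk (M.setoidAt w₁) d)).out)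
        = Quotient.mk (M.setoidAt w₁) (bV M w) := by
      rw [hout, ← h1]
      exact ((hu hw).2).symm
    exact htr' w hws _ _ ((hmkeq _ _).mp h2)
  have Hba : ∀ u ⊆ {w | w ∈ s ∧ Quotient.mk (M.setoidAt w₁) (bV M w)
      = f (Quotient.mk (M.setoidAt w₁) (aV M w))},
      (∃ e, ∀ w ∈ u, M.eqI w e (bV M w)) → ∃ d, ∀ w ∈ u, M.eqI w d (aV M w) := by
    rintro u hu ⟨e, he⟩
    rcases Set.eq_empty_or_nonempty u with rfl | ⟨w₀, hw₀⟩
    · exact ⟨Classical.choice M.dNonempty, fun w hw => absurd hw (by simp)⟩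
    refine ⟨aV M w₀, fun w hw => ?_⟩
    have hws : w ∈ s := (hu hw).1
    have hb : ∀ w' ∈ u, Quotient.mk (M.setoidAt w₁) (bV M w')
        = Quotient.mk (M.setoidAt w₁) e :=
      fun w' hw' =>
        (hmkeq _ _).mpr ((M.eqEquiv w₁).symm (htr w' (hu hw').1 _ _ (he w' hw')))
    have hf : f (Quotient.mk (M.setoidAt w₁) (aV M w))
        = f (Quotient.mk (M.setoidAt w₁) (aV M w₀)) := by
      rw [← (hu hw).2, ← (hu hw₀).2, hb w hw, hb w₀ hw₀]
    exact htr' w hws _ _ ((M.eqEquiv w₁).symm ((hmkeq _ _).mp (hinj hf)))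
  have Hnb : ∃ e, ∀ w ∈ {w | w ∈ s ∧ Quotient.mk (M.setoidAt w₁) (bV M w)
      = f (Quotient.mk (M.setoidAt w₁) (aV M w))}, ¬ M.eqI w e (bV M w) := by
    refine ⟨q₀.out, fun w hw hcon => ?_⟩
    refine hq₀ (Quotient.mk (M.setoidAt w₁) (aV M w)) ?_
    have h1 : Quotient.mk (M.setoidAt w₁) (bV M w) = Quotient.mk (M.setoidAt w₁) q₀.out :=
      (hmkeq _ _).mpr ((M.eqEquiv w₁).symm (htr w hw.1 _ _ hcon))
    rw [← hw.2, h1, hout]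
  obtain ⟨d₀, hd₀⟩ := hη _ hty ⟨Hab, Hba, Hnb⟩
  obtain ⟨w, hws, ha, hb⟩ := hθ d₀ ((f (Quotient.mk (M.setoidAt w₁) d₀)).out)
  refine hd₀ w ⟨hws, ?_⟩ ha
  have h1 : Quotient.mk (M.setoidAt w₁) (aV M w) = Quotient.mk (M.setoidAt w₁) d₀ :=
    (hmkeq _ _).mpr ((M.eqEquiv w₁).symm (htr w hws _ _ ha))
  have h2 : Quotient.mk (M.setoidAt w₁) (bV M w)
      = Quotient.mk (M.setoidAt w₁) ((f (Quotient.mk (M.setoidAt w₁) d₀)).out) :=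
    (hmkeq _ _).mpr ((M.eqEquiv w₁).symm (htr w hws _ _ hb))
  rw [h2, hout, h1]

/-! ### Properties of the canonical model -/

lemma canon_isId_s18 (A : Struc σ) : (canonModelOf A).IsId := fun _ _ _ => Iff.rfl

lemma canon_aV (A : Struc σ) (w : (canonModelOf A).W) : aV (canonModelOf A) w = w.1 := rfl

lemma canon_bV (A : Struc σ) (w : (canonModelOf A).W) : bV (canonModelOf A) w = w.2 := rfl

lemma canon_rho (A : Struc σ) (s : Set (canonModelOf A).W) (g : ℕ → A.D) :
    Support (canonModelOf A) s g rho := by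
  rw [support_rho (canonModelOf A) s g]
  intro d e
  by_cases h : d = e
  · exact Or.inl (fun w _ => h)
  · exact Or.inr (fun w _ => h)

lemma canon_not_theta (A : Struc σ) (g : ℕ → A.D) :
    ¬ Support (canonModelOf A) Set.univ g (thetaOf extA extB) := by
  rw [support_theta (canonModelOf A) Set.univ g]
  rintro ⟨d, e, h⟩
  exact h (d, e) trivial ⟨rfl, rfl⟩

lemma canon_eqI (A : Struc σ) (w : (canonModelOf A).W) (d e : A.D) :
    (canonModelOf A).eqI w d e ↔ d = e := Iff.rfl

lemma canon_eta (A : Struc σ) (hfin : Finite A.D) (g : ℕ → A.D)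
    (s : Set (canonModelOf A).W) :
    Support (canonModelOf A) s g (etaOf extA extB) := by
  classical
  rw [support_eta_s18 (canonModelOf A) s g]
  simp only [canon_aV, canon_bV, canon_eqI]
  rintro t ht ⟨hab, hba, e₀, he₀⟩
  by_contra hcon
  push_neg at hcon
  have htot : ∀ d : A.D, ∃ w ∈ t, w.1 = d := by
    intro d
    obtain ⟨w, hw, h⟩ := hcon d
    exact ⟨w, hw, h.symm⟩
  choose f hf using fun d : A.D =>
    hab {w ∈ t | w.1 = d} (fun w hw => hw.1) ⟨d, fun w hw => hw.2.symm⟩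
  have hinj : Function.Injective f := by
    intro d d' heq
    obtain ⟨w, hwt, hw1⟩ := htot d
    obtain ⟨w', hw't, hw'1⟩ := htot d'
    have h1 : f d = w.2 := hf d w ⟨hwt, hw1⟩
    have h2 : f d' = w'.2 := hf d' w' ⟨hw't, hw'1⟩
    obtain ⟨dd, hdd⟩ := hba {w'' ∈ t | w''.2 = w.2} (fun w'' hw'' => hw''.1)
      ⟨w.2, fun w'' hw'' => hw''.2.symm⟩
    have e1 : dd = w.1 := hdd w ⟨hwt, rfl⟩
    have e2 : dd = w'.1 := hdd w' ⟨hw't, by rw [← h2, ← heq, h1]⟩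
    rw [← hw1, ← hw'1, ← e1, ← e2]
  have hsurj := Finite.injective_iff_surjective.mp hinj
  obtain ⟨d, hd⟩ := hsurj e₀
  obtain ⟨w, hwt, hw1⟩ := htot d
  have : f d = w.2 := hf d w ⟨hwt, hw1⟩
  exact he₀ w hwt (hd.symm.trans this)

end Proof

/-- Reduction of finite validity to InqBQ validity: for a first-order
sentence α in a signature Σ not containing a, b, the following are equivalent:
(1) α is finitely valid; (2) η → (α ⩒ θ) is id-valid over Σ ∪ {a,b};
(3) (ρ ∧ η) → (α ⩒ θ) is valid over Σ ∪ {a,b}. -/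
theorem finite_validity_reduction (σ : Sig) (α : Formula σ)
    (hcl : α.IsClassical) (hsen : α.IsSentence) :
    ((∀ (A : Struc σ), Finite A.D → ∀ g : ℕ → A.D, TSat A g α) ↔
      IdValid (Formula.impl (etaOf extA extB) (.idisj α.lift (thetaOf extA extB)))) ∧
    ((∀ (A : Struc σ), Finite A.D → ∀ g : ℕ → A.D, TSat A g α) ↔
      Valid (Formula.impl (.conj rho (etaOf extA extB))
        (.idisj α.lift (thetaOf extA extB)))) := by
  have main_fwd : (∀ (A : Struc σ), Finite A.D → ∀ g : ℕ → A.D, TSat A g α) →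
      ∀ (M : Model (sigExt σ)) (t : Set M.W) (g : ℕ → M.D),
        (∀ d e : M.D, (∀ w ∈ t, M.eqI w d e) ∨ (∀ w ∈ t, ¬ M.eqI w d e)) →
        Support M t g (etaOf extA extB) →
        (Support M t g α.lift ∨ Support M t g (thetaOf extA extB)) := by
    intro hFV M t g hρ hη
    by_cases hθ : Support M t g (thetaOf extA extB)
    · exact Or.inr hθ
    · left
      rw [classical_support M α hcl]
      intro w hw
      have hfin : Finite (Quotient (M.setoidAt w)) := finite_quotient M t g hρ hη hθ w hw
      exact hFV (qStruc M w) hfin _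
  have main_bwd : ∀ (A : Struc σ), Finite A.D → ∀ g : ℕ → A.D,
      (Support (canonModelOf A) Set.univ g α.lift ∨
        Support (canonModelOf A) Set.univ g (thetaOf extA extB)) → TSat A g α := by
    intro A hA g h
    rcases h with h | h
    · obtain ⟨d⟩ := A.dNonempty
      exact (canon_support A α hcl Set.univ g).mp h (d, d) trivial
    · exact absurd h (canon_not_theta A g)
  constructor
  · constructor
    · intro hFV M hid s g
      simp only [Support]
      intro t ht hη
      refine main_fwd hFV M t g ?_ hη
      intro d e
      by_cases h : d = e
      · exact Or.inl fun w _ => (hid w d e).mpr h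
      · exact Or.inr fun w _ hc => h ((hid w d e).mp hc)
    · intro hVal A hA g
      have h := hVal (canonModelOf A) (canon_isId_s18 A) Set.univ g
      simp only [Support] at h
      exact main_bwd A hA g (h Set.univ (fun _ h => h) (canon_eta A hA g _))
  · constructor
    · intro hFV M s g
      simp only [Support]
      rintro t ht ⟨hρt, hηt⟩
      exact main_fwd hFV M t g ((support_rho M t g).mp hρt) hηt
    · intro hVal A hA g
      have h := hVal (canonModelOf A) Set.univ g
      simp only [Support] at h
      exact main_bwd A hA g (h Set.univ (fun _ h => h)
        ⟨canon_rho A Set.univ g, canon_eta A hA g _⟩)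

end InqBQ
end
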